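/- Two terms built from variables by ordinal addition and left multiplication by ω define the same function on all of ω^ω if and only if the corresponding flat normal forms (sums of monomials ω^e·x obtained via distributivity ω(x+y)=ωx+ωy and absorption x+y+ωx = y+ωx) can be transformed into each other using only associativity of +, the identity x+y+z+x+t+y = y+x+z+x+t+y, absorption x+y+ωx=y+ωx, units, and ω·0=0. -/

import Mathlib

open Ordinal

/-- Terms over the signature `{0, +, ω·}`, with variables indexed by `ℕ`. -/
inductive Term where
  | zero : Term
  | var : ℕ → Term
  | add : Term → Term → Term
  | omul : Term → Term
deriving DecidableEq

/-- Evaluation of a term under an assignment of ordinals to the variables,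
interpreting `add` as ordinal addition and `omul` as left multiplication by `ω`. -/
noncomputable def Term.eval (φ : ℕ → Ordinal) : Term → Ordinal
  | .zero => 0
  | .var i => φ i
  | .add E F => E.eval φ + F.eval φ
  | .omul E => ω * E.eval φ

/-- Derivability in equational logic from the axiom system
`Σ = {associativity, ω(x+y)=ωx+ωy, x+y+ωx=y+ωx, x+y+z+x+t+y=y+x+z+x+t+y,
x+0=x, 0+x=x, ω·0=0}`.  The axioms are stated schematically (for arbitrary
terms substituted for the variables), which accounts for the substitution
rule of equational logic. -/
inductive Derives : Term → Term → Prop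
  | assoc (x y z : Term) : Derives (x.add (y.add z)) ((x.add y).add z)
  | distrib (x y : Term) : Derives ((x.add y).omul) ((x.omul).add (y.omul))
  | absorb (x y : Term) : Derives ((x.add y).add x.omul) (y.add x.omul)
  | guarded (x y z t : Term) :
      Derives (((((x.add y).add z).add x).add t).add y)
              (((((y.add x).add z).add x).add t).add y)
  | add_zero (x : Term) : Derives (x.add .zero) x
  | zero_add (x : Term) : Derives (Term.add .zero x) x
  | omul_zero : Derives (Term.omul .zero) .zero
  | refl (x : Term) : Derives x x
  | symm {x y : Term} : Derives x y → Derives y x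
  | trans {x y z : Term} : Derives x y → Derives y z → Derives x z
  | add_congr {x y x' y' : Term} :
      Derives x x' → Derives y y' → Derives (x.add y) (x'.add y')
  | omul_congr {x x' : Term} : Derives x x' → Derives x.omul x'.omul

abbrev Mon := ℕ × ℕ

def mtermAux : ℕ → ℕ → Term
  | 0, i => .var i
  | (e+1), i => .omul (mtermAux e i)

def mterm (m : Mon) : Term := mtermAux m.1 m.2

@[simp] lemma mterm_zero (i : ℕ) : mterm (0, i) = .var i := rfl
@[simp] lemma mterm_succ (e i : ℕ) : mterm (e+1, i) = .omul (mterm (e, i)) := rfl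

def toTerm : List Mon → Term
  | [] => .zero
  | m :: L => (mterm m).add (toTerm L)

@[simp] lemma toTerm_nil : toTerm [] = .zero := rfl
@[simp] lemma toTerm_cons (m : Mon) (L : List Mon) :
    toTerm (m :: L) = (mterm m).add (toTerm L) := rfl

noncomputable def lval (φ : ℕ → Ordinal) (L : List Mon) : Ordinal :=
  L.foldr (fun m v => ω ^ (m.1 : Ordinal) * φ m.2 + v) 0

@[simp] lemma lval_nil (φ) : lval φ [] = 0 := rfl
@[simp] lemma lval_cons (φ) (m : Mon) (L) :
    lval φ (m :: L) = ω ^ (m.1 : Ordinal) * φ m.2 + lval φ L := rfl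

lemma eval_mterm (φ : ℕ → Ordinal) (e i : ℕ) :
    (mterm (e, i)).eval φ = ω ^ (e : Ordinal) * φ i := by
  induction e with
  | zero => simp [Term.eval]
  | succ e ih =>
      have h : ((e+1 : ℕ) : Ordinal) = 1 + (e : Ordinal) := by
        norm_cast
        omega
      calc (mterm (e+1, i)).eval φ = ω * ((mterm (e,i)).eval φ) := rfl
        _ = ω * (ω ^ (e:Ordinal) * φ i) := by rw [ih]
        _ = (ω * ω ^ (e:Ordinal)) * φ i := by rw [mul_assoc]
        _ = ω ^ ((e+1:ℕ) : Ordinal) * φ i := by rw [h, opow_add, opow_one]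

lemma eval_toTerm (φ : ℕ → Ordinal) (L : List Mon) :
    (toTerm L).eval φ = lval φ L := by
  induction L with
  | nil => rfl
  | cons m L ih =>
      obtain ⟨e, i⟩ := m
      simp [Term.eval, ih, eval_mterm]

/- ============ Derives helper combinators ============ -/

namespace Derives

lemma app (A B : List Mon) :
    Derives (toTerm (A ++ B)) ((toTerm A).add (toTerm B)) := by
  induction A with
  | nil => exact (Derives.zero_add (toTerm B)).symm
  | cons m A ih =>
      simp only [List.cons_append, toTerm_cons]
      exact ((Derives.refl (mterm m)).add_congr ih).trans
        (Derives.assoc (mterm m) (toTerm A) (toTerm B))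

lemma cong_prefix (P : List Mon) {X Y : List Mon}
    (h : Derives (toTerm X) (toTerm Y)) :
    Derives (toTerm (P ++ X)) (toTerm (P ++ Y)) := by
  induction P with
  | nil => exact h
  | cons m P ih => exact (Derives.refl (mterm m)).add_congr ih

/-- `toTerm (u :: v :: Z ++ a :: T ++ b :: R)` is the five-fold left-assoc pattern plus `R`. -/
lemma pat (u v a b : Mon) (Z T R : List Mon) :
    Derives (toTerm (u :: v :: (Z ++ (a :: (T ++ (b :: R))))))
      (((((((mterm u).add (mterm v)).add (toTerm Z)).add (mterm a)).add
          (toTerm T)).add (mterm b)).add (toTerm R)) := by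
  have hW : Derives (toTerm (Z ++ (a :: (T ++ (b :: R)))))
      ((toTerm Z).add ((mterm a).add ((toTerm T).add ((mterm b).add (toTerm R))))) := by
    refine (app Z _).trans ((Derives.refl (toTerm Z)).add_congr ?_)
    rw [toTerm_cons]
    exact (Derives.refl (mterm a)).add_congr (app T (b :: R))
  simp only [toTerm_cons]
  refine ((Derives.refl (mterm u)).add_congr ((Derives.refl (mterm v)).add_congr hW)).trans ?_
  -- now pure associativity reshuffle
  refine (Derives.assoc _ _ _).trans ?_
  refine (Derives.assoc _ _ _).trans ?_
  refine (Derives.assoc _ _ _).trans ?_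
  refine (Derives.assoc _ _ _).trans ?_
  exact Derives.assoc _ _ _

end Derives

def SwapStep (L L' : List Mon) : Prop :=
  ∃ P a b Q, a ∈ Q ∧ b ∈ Q ∧ L = P ++ a :: b :: Q ∧ L' = P ++ b :: a :: Q

lemma swapStep_symm {L L'} (h : SwapStep L L') : SwapStep L' L := by
  obtain ⟨P, a, b, Q, ha, hb, h1, h2⟩ := h
  exact ⟨P, b, a, Q, hb, ha, h2, h1⟩

lemma swapStep_derives {L L'} (h : SwapStep L L') :
    Derives (toTerm L) (toTerm L') := by
  obtain ⟨P, a, b, Q, ha, hb, rfl, rfl⟩ := h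
  rcases eq_or_ne a b with rfl | hab
  · exact Derives.refl _
  · -- find ordered occurrences of a and b in Q
    obtain ⟨S₁, S₂, rfl⟩ := List.append_of_mem ha
    have hb' : b ∈ S₁ ∨ b ∈ S₂ := by
      rcases List.mem_append.mp hb with h | h
      · exact Or.inl h
      · rcases List.mem_cons.mp h with h | h
        · exact absurd h.symm hab
        · exact Or.inr h
    rcases hb' with hbS | hbS
    · -- order: b then a in Q
      obtain ⟨Z, T, rfl⟩ := List.append_of_mem hbS
      apply Derives.symm
      apply Derives.cong_prefix P
      have e1 : (Z ++ b :: T) ++ a :: S₂ = Z ++ (b :: (T ++ (a :: S₂))) := by simp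
      rw [e1]
      refine (Derives.pat b a b a Z T S₂).trans ?_
      refine Derives.trans ?_ (Derives.symm (Derives.pat a b b a Z T S₂))
      exact (Derives.guarded (mterm b) (mterm a) (toTerm Z) (toTerm T)).add_congr
        (Derives.refl _)
    · -- order: a then b in Q
      obtain ⟨T, R, rfl⟩ := List.append_of_mem hbS
      apply Derives.cong_prefix P
      have e1 : S₁ ++ a :: (T ++ b :: R) = S₁ ++ (a :: (T ++ (b :: R))) := by simp
      rw [e1]
      refine (Derives.pat a b a b S₁ T R).trans ?_
      refine Derives.trans ?_ (Derives.symm (Derives.pat b a a b S₁ T R))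
      exact (Derives.guarded (mterm a) (mterm b) (toTerm S₁) (toTerm T)).add_congr
        (Derives.refl _)

def swapEq : List Mon → List Mon → Prop := Relation.ReflTransGen SwapStep

lemma swapEq_derives {L L'} (h : swapEq L L') : Derives (toTerm L) (toTerm L') := by
  induction h with
  | refl => exact Derives.refl _
  | tail _ h ih => exact ih.trans (swapStep_derives h)

lemma swapEq_symm {L L'} (h : swapEq L L') : swapEq L' L := by
  induction h with
  | refl => exact Relation.ReflTransGen.refl
  | tail _ h ih =>
      exact Relation.ReflTransGen.trans
        (Relation.ReflTransGen.single (swapStep_symm h)) ih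

lemma swapStep_perm {L L'} (h : SwapStep L L') : L.Perm L' := by
  obtain ⟨P, a, b, Q, _, _, rfl, rfl⟩ := h
  exact List.Perm.append_left P ((List.Perm.swap b a Q))

lemma swapEq_perm {L L'} (h : swapEq L L') : L.Perm L' := by
  induction h with
  | refl => exact List.Perm.refl _
  | tail _ h ih => exact ih.trans (swapStep_perm h)

/- ============ absorption calculus ============ -/

namespace Derives

/-- `X + ωX ≈ ωX` -/
lemma absadj (X : Term) : Derives (X.add X.omul) X.omul := by
  have h1 : Derives (X.add X.omul) ((X.add .zero).add X.omul) :=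
    (Derives.add_zero X).symm.add_congr (Derives.refl _)
  exact h1.trans ((Derives.absorb X .zero).trans (Derives.zero_add _))

/-- `ω^e x + ω^e' x ≈ ω^e' x` for `e < e'` -/
lemma monAbs (i : ℕ) : ∀ d e, Derives ((mterm (e, i)).add (mterm (e + d + 1, i)))
    (mterm (e + d + 1, i)) := by
  intro d
  induction d with
  | zero => intro e; exact absadj (mterm (e, i))
  | succ d ih =>
      intro e
      have h1 : e + (d + 1) + 1 = (e + 1) + d + 1 := by omega
      rw [h1]
      have ih' := ih (e + 1)
      refine Derives.trans ?_ ih'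
      refine Derives.trans ((Derives.refl _).add_congr ih'.symm) ?_
      refine (Derives.assoc _ _ _).trans ?_
      exact (Derives.add_congr (absadj (mterm (e, i))) (Derives.refl _))

lemma monAbs' {e e' : ℕ} (i : ℕ) (h : e < e') :
    Derives ((mterm (e, i)).add (mterm (e', i))) (mterm (e', i)) := by
  obtain ⟨d, rfl⟩ : ∃ d, e' = e + d + 1 := ⟨e' - e - 1, by omega⟩
  exact monAbs i _ e

/-- adjacent-exponent deletion at distance: `(e,i) :: Q₁ ++ (e+1,i) :: Q₂ ≈ Q₁ ++ (e+1,i) :: Q₂` -/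
lemma del1 (e i : ℕ) (Q₁ Q₂ : List Mon) :
    Derives (toTerm ((e,i) :: (Q₁ ++ (e+1,i) :: Q₂))) (toTerm (Q₁ ++ (e+1,i) :: Q₂)) := by
  have hsplit : Derives (toTerm (Q₁ ++ (e+1,i) :: Q₂))
      ((toTerm Q₁).add ((mterm (e+1,i)).add (toTerm Q₂))) := app Q₁ _
  rw [toTerm_cons]
  refine ((Derives.refl _).add_congr hsplit).trans ?_
  refine Derives.trans ?_ hsplit.symm
  -- me + (tQ₁ + (me' + tQ₂)) ≈ tQ₁ + (me' + tQ₂)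
  have hme' : (mterm (e+1, i)) = (mterm (e,i)).omul := rfl
  refine ((Derives.refl _).add_congr (Derives.assoc _ _ _)).trans ?_
  refine (Derives.assoc _ _ _).trans ?_
  refine Derives.trans ?_ (Derives.assoc _ _ _).symm
  refine (Derives.add_congr ?_ (Derives.refl (toTerm Q₂)))
  refine (Derives.assoc _ _ _).trans ?_
  rw [hme']
  exact Derives.absorb (mterm (e,i)) (toTerm Q₁)

/-- general deletion: `(e,i) :: Q₁ ++ (e',i) :: Q₂ ≈ Q₁ ++ (e',i) :: Q₂` for `e < e'` -/
lemma delgen {e e' : ℕ} (i : ℕ) (h : e < e') (Q₁ Q₂ : List Mon) :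
    Derives (toTerm ((e,i) :: (Q₁ ++ (e',i) :: Q₂))) (toTerm (Q₁ ++ (e',i) :: Q₂)) := by
  rcases Nat.eq_or_lt_of_le h with heq | hlt
  · obtain rfl : e' = e + 1 := heq.symm
    exact del1 e i Q₁ Q₂
  · -- e + 1 < e', so e < e' - 1
    obtain ⟨f, rfl⟩ : ∃ f, e' = f + 1 := ⟨e' - 1, by omega⟩
    have hef : e < f := by omega
    -- insert (f, i) in front of Q₁
    have hins : Derives (toTerm (Q₁ ++ (f+1,i) :: Q₂)) (toTerm ((f,i) :: (Q₁ ++ (f+1,i) :: Q₂))) :=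
      (del1 f i Q₁ Q₂).symm
    refine Derives.trans ?_ hins.symm
    refine Derives.trans ((Derives.refl _).add_congr hins) ?_
    rw [toTerm_cons]
    refine (Derives.assoc _ _ _).trans ?_
    exact (monAbs' i hef).add_congr (Derives.refl _)

end Derives

/- ============ reduced lists ============ -/

def RedRel (a b : Mon) : Prop := a.2 = b.2 → b.1 ≤ a.1

def Red (L : List Mon) : Prop := L.Pairwise RedRel

def reduceL : List Mon → List Mon
  | [] => []
  | m :: L =>
      let L' := reduceL L
      if L'.any (fun m' => decide (m'.2 = m.2 ∧ m.1 < m'.1)) then L' else m :: L'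

lemma red_reduceL (L : List Mon) : Red (reduceL L) := by
  induction L with
  | nil => exact List.Pairwise.nil
  | cons m L ih =>
      rw [reduceL]
      split
      · exact ih
      · rename_i hnot
        refine List.Pairwise.cons ?_ ih
        intro m' hm' heq
        by_contra hlt
        exact hnot (List.any_eq_true.mpr ⟨m', hm', by simp [heq]; omega⟩)

lemma derives_reduceL (L : List Mon) : Derives (toTerm L) (toTerm (reduceL L)) := by
  induction L with
  | nil => exact Derives.refl _
  | cons m L ih =>
      rw [reduceL]
      split
      · rename_i hany
        obtain ⟨m', hm', hcond⟩ := List.any_eq_true.mp hany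
        have hcond' : m'.2 = m.2 ∧ m.1 < m'.1 := by simpa using hcond
        obtain ⟨Q₁, Q₂, hsplit⟩ := List.append_of_mem hm'
        refine Derives.trans ((Derives.refl (mterm m)).add_congr ih) ?_
        rw [hsplit]
        have hm'eq : m' = (m'.1, m'.2) := rfl
        have hmeq : m = (m.1, m.2) := rfl
        rw [hmeq, hm'eq, hcond'.1]
        exact Derives.delgen m.2 hcond'.2 Q₁ Q₂
      · exact (Derives.refl (mterm m)).add_congr ih

/- ============ normal form ============ -/

def NF : Term → List Mon
  | .zero => []
  | .var i => [(0, i)]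
  | .add E F => NF E ++ NF F
  | .omul E => (NF E).map (fun m => (m.1 + 1, m.2))

lemma omul_toTerm (L : List Mon) :
    Derives ((toTerm L).omul) (toTerm (L.map (fun m => (m.1 + 1, m.2)))) := by
  induction L with
  | nil => exact Derives.omul_zero
  | cons m L ih =>
      simp only [toTerm_cons, List.map_cons]
      refine (Derives.distrib _ _).trans ?_
      refine Derives.add_congr ?_ ih
      obtain ⟨e, i⟩ := m
      exact Derives.refl _

lemma derives_NF (E : Term) : Derives E (toTerm (NF E)) := by
  induction E with
  | zero => exact Derives.refl _
  | var i => exact (Derives.add_zero (Term.var i)).symm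
  | add E F ihE ihF => exact (ihE.add_congr ihF).trans (Derives.app (NF E) (NF F)).symm
  | omul E ihE => exact (ihE.omul_congr).trans (omul_toTerm (NF E))

/- ============ bubbling ============ -/

lemma bubble : ∀ (P : List Mon) (b : Mon) (S : List Mon),
    b ∈ S → (∀ x ∈ P, x ∈ S) → swapEq (P ++ b :: S) (b :: (P ++ S)) := by
  intro P
  induction P using List.reverseRecOn with
  | nil => intro b S _ _; exact Relation.ReflTransGen.refl
  | append_singleton P d ih =>
      intro b S hb hP
      have step2 : SwapStep (P ++ d :: b :: S) (P ++ b :: d :: S) := by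
        refine ⟨P, d, b, S, hP d (by simp), hb, rfl, rfl⟩
      have h3 : swapEq (P ++ b :: d :: S) (b :: (P ++ d :: S)) := by
        refine ih b (d :: S) (List.mem_cons_of_mem _ hb) ?_
        intro x hx
        exact List.mem_cons_of_mem _ (hP x (by simp [hx]))
      have e1 : (P ++ [d]) ++ b :: S = P ++ d :: b :: S := by simp
      have e2 : b :: (P ++ d :: S) = b :: ((P ++ [d]) ++ S) := by simp
      rw [e1]
      exact Relation.ReflTransGen.head step2 (e2 ▸ h3)

lemma red_swapStep {L L'} (hL : Red L) (h : SwapStep L L') : Red L' := by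
  obtain ⟨P, a, b, Q, ha, hb, rfl, rfl⟩ := h
  rw [Red, List.pairwise_append] at hL ⊢
  obtain ⟨hP, hX, hcross⟩ := hL
  refine ⟨hP, ?_, ?_⟩
  · rw [List.pairwise_cons] at hX ⊢
    obtain ⟨haAll, hX⟩ := hX
    rw [List.pairwise_cons] at hX
    obtain ⟨hbAll, hQ⟩ := hX
    have hba : RedRel b a := hbAll a ha
    refine ⟨?_, ?_⟩
    · intro x hx
      rcases List.mem_cons.mp hx with rfl | hx
      · exact hba
      · exact hbAll x hx
    · rw [List.pairwise_cons]
      exact ⟨fun x hx => haAll x (List.mem_cons_of_mem _ hx), hQ⟩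
  · intro x hx y hy
    refine hcross x hx y ?_
    simp only [List.mem_cons] at hy ⊢
    tauto

lemma red_swapEq {L L'} (hL : Red L) (h : swapEq L L') : Red L' := by
  induction h with
  | refl => exact hL
  | tail _ h ih => exact red_swapStep ih h

lemma omega_mul_omega_opow : ω * ω ^ (ω:Ordinal) = ω ^ (ω:Ordinal) := by
  have h1 : ω * ω ^ (ω:Ordinal) = ω ^ ((1:Ordinal) + ω) := by
    rw [opow_add, opow_one]
  rw [h1, Ordinal.one_add_omega0]

lemma one_add_of_lt_omega {a : Ordinal} (h : a < ω) : 1 + a = a + 1 := by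
  obtain ⟨n, rfl⟩ := Ordinal.lt_omega0.mp h
  have : ((1 + n : ℕ) : Ordinal) = ((n + 1 : ℕ) : Ordinal) := by rw [Nat.add_comm]
  push_cast at this
  exact this

lemma sem_absorb {x : Ordinal} (hx : x < ω ^ ω) (y : Ordinal) :
    x + (y + ω * x) = y + ω * x := by
  rcases eq_or_ne x 0 with rfl | hx0
  · simp
  · have hlog : log ω x < ω := (Ordinal.lt_opow_iff_log_lt Ordinal.one_lt_omega0 hx0).mp hx
    apply Ordinal.add_absorp (b := log ω x + 1)
    · have h := Ordinal.lt_opow_succ_log_self (b := ω) Ordinal.one_lt_omega0 x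
      rwa [← Ordinal.add_one_eq_succ] at h
    · have h1 : ω ^ (log ω x + 1) = ω * ω ^ log ω x := by
        rw [← one_add_of_lt_omega hlog, opow_add, opow_one]
      have h2 : ω * ω ^ log ω x ≤ ω * x :=
        mul_le_mul_right (Ordinal.opow_log_le_self ω hx0) ω
      calc ω ^ (log ω x + 1) = ω * ω ^ log ω x := h1
        _ ≤ ω * x := h2
        _ ≤ y + ω * x := le_add_self

lemma div_lt_omega_of_lt {x c : Ordinal} (hc : c ≠ 0) (hxc : x ≤ c) :
    x / ω ^ log ω c < ω := by
  rw [Ordinal.div_lt (opow_ne_zero _ omega0_ne_zero)]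
  calc x ≤ c := hxc
    _ < ω ^ Order.succ (log ω c) := Ordinal.lt_opow_succ_log_self Ordinal.one_lt_omega0 c
    _ = ω ^ log ω c * ω := by rw [← Ordinal.add_one_eq_succ, opow_add, opow_one]

lemma add_absorb_mod {d x z : Ordinal} (hx : x / ω ^ d < ω) (hz : ω ^ d ≤ z) :
    x + z = ω ^ d * (x / ω ^ d) + z := by
  conv_lhs => rw [← Ordinal.div_add_mod x (ω ^ d)]
  rw [add_assoc]
  congr 1
  exact Ordinal.add_absorp (Ordinal.mod_lt x (opow_ne_zero _ omega0_ne_zero)) hz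

/-- key commutation: if `x ≤ c` and `y ≤ c` then `x + (y + c) = y + (x + c)`. -/
lemma sem_comm {x y c : Ordinal} (hx : x ≤ c) (hy : y ≤ c) :
    x + (y + c) = y + (x + c) := by
  rcases eq_or_ne c 0 with rfl | hc
  · have hx0 : x = 0 := nonpos_iff_eq_zero.mp hx
    have hy0 : y = 0 := nonpos_iff_eq_zero.mp hy
    simp [hx0, hy0]
  · set d := log ω c with hd
    have hwc : ω ^ d ≤ c := Ordinal.opow_log_le_self ω hc
    have hxd : x / ω ^ d < ω := div_lt_omega_of_lt hc hx
    have hyd : y / ω ^ d < ω := div_lt_omega_of_lt hc hy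
    have h1 : x + (y + c) = ω ^ d * (x / ω ^ d) + (ω ^ d * (y / ω ^ d) + c) := by
      rw [add_absorb_mod hxd (le_trans hwc (le_add_self : c ≤ y + c))]
      congr 1
      exact add_absorb_mod hyd hwc
    have h2 : y + (x + c) = ω ^ d * (y / ω ^ d) + (ω ^ d * (x / ω ^ d) + c) := by
      rw [add_absorb_mod hyd (le_trans hwc (le_add_self : c ≤ x + c))]
      congr 1
      exact add_absorb_mod hxd hwc
    rw [h1, h2, ← add_assoc, ← add_assoc, ← mul_add, ← mul_add]
    obtain ⟨m, hm⟩ := Ordinal.lt_omega0.mp hxd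
    obtain ⟨n, hn⟩ := Ordinal.lt_omega0.mp hyd
    rw [hm, hn]
    norm_cast
    rw [Nat.add_comm]

lemma eval_lt_of_bounded (φ : ℕ → Ordinal) (hφ : ∀ i, φ i < ω ^ ω) (E : Term) :
    E.eval φ < ω ^ ω := by
  induction E with
  | zero => simpa [Term.eval] using opow_pos (ω:Ordinal) omega0_pos
  | var i => exact hφ i
  | add E F ihE ihF => exact Ordinal.principal_add_omega0_opow ω ihE ihF
  | omul E ihE =>
      show ω * E.eval φ < ω ^ ω
      calc ω * E.eval φ < ω * ω ^ (ω:Ordinal) :=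
            mul_lt_mul_of_pos_left ihE omega0_pos
        _ = ω ^ (ω:Ordinal) := omega_mul_omega_opow

theorem soundness {E F : Term} (h : Derives E F) :
    ∀ φ : ℕ → Ordinal, (∀ i, φ i < ω ^ ω) → E.eval φ = F.eval φ := by
  induction h with
  | assoc x y z => intro φ _; simp [Term.eval, add_assoc]
  | distrib x y => intro φ _; simp [Term.eval, mul_add]
  | absorb x y =>
      intro φ hφ
      show (x.eval φ + y.eval φ) + ω * x.eval φ = y.eval φ + ω * x.eval φ
      rw [add_assoc]
      exact sem_absorb (eval_lt_of_bounded φ hφ x) (y.eval φ)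
  | guarded x y z t =>
      intro φ hφ
      show ((((x.eval φ + y.eval φ) + z.eval φ) + x.eval φ) + t.eval φ) + y.eval φ =
        ((((y.eval φ + x.eval φ) + z.eval φ) + x.eval φ) + t.eval φ) + y.eval φ
      simp only [add_assoc]
      set X := x.eval φ
      set Y := y.eval φ
      set Z := z.eval φ
      set T := t.eval φ
      have hx : X ≤ Z + (X + (T + Y)) :=
        le_trans (le_self_add : X ≤ X + (T + Y)) (le_add_self : X + (T + Y) ≤ Z + (X + (T + Y)))
      have hy : Y ≤ Z + (X + (T + Y)) :=
        le_trans (le_trans (le_add_self : Y ≤ T + Y) (le_add_self : T + Y ≤ X + (T + Y)))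
          (le_add_self : X + (T + Y) ≤ Z + (X + (T + Y)))
      exact sem_comm hx hy
  | add_zero x => intro φ _; simp [Term.eval]
  | zero_add x => intro φ _; simp [Term.eval]
  | omul_zero => intro φ _; simp [Term.eval]
  | refl x => intro φ _; rfl
  | symm _ ih => intro φ hφ; exact (ih φ hφ).symm
  | trans _ _ ih1 ih2 => intro φ hφ; exact (ih1 φ hφ).trans (ih2 φ hφ)
  | add_congr _ _ ih1 ih2 =>
      intro φ hφ
      show _ + _ = _ + _
      rw [ih1 φ hφ, ih2 φ hφ]
  | omul_congr _ ih =>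
      intro φ hφ
      show ω * _ = ω * _
      rw [ih φ hφ]

/- ============ CNF scan machinery ============ -/

noncomputable def V : List (ℕ × ℕ) → Ordinal
  | [] => 0
  | t :: T => ω ^ (t.1 : Ordinal) * t.2 + V T

@[simp] lemma V_nil : V [] = 0 := rfl
@[simp] lemma V_cons (t : ℕ × ℕ) (T) : V (t :: T) = ω ^ (t.1 : Ordinal) * t.2 + V T := rfl

def tailLT (lam : ℕ) : List (ℕ × ℕ) → List (ℕ × ℕ)
  | [] => []
  | t :: T => if (t :: T).all (fun s => decide (s.1 < lam)) then t :: T else tailLT lam T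

def sumCoeffAt (lam : ℕ) (T : List (ℕ × ℕ)) : ℕ :=
  ((T.filter (fun t => decide (t.1 = lam))).map (·.2)).sum

@[simp] lemma sumCoeffAt_nil (lam : ℕ) : sumCoeffAt lam [] = 0 := rfl

lemma sumCoeffAt_cons (lam : ℕ) (t : ℕ × ℕ) (T) :
    sumCoeffAt lam (t :: T) = (if t.1 = lam then t.2 else 0) + sumCoeffAt lam T := by
  by_cases h : t.1 = lam <;> simp [sumCoeffAt, List.filter_cons, h]

lemma sumCoeffAt_append (lam : ℕ) (A B : List (ℕ × ℕ)) :
    sumCoeffAt lam (A ++ B) = sumCoeffAt lam A + sumCoeffAt lam B := by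
  simp [sumCoeffAt, List.filter_append]

lemma sumCoeffAt_eq_zero {lam : ℕ} {T : List (ℕ × ℕ)} (h : ∀ t ∈ T, t.1 ≠ lam) :
    sumCoeffAt lam T = 0 := by
  induction T with
  | nil => rfl
  | cons t T ih =>
      rw [sumCoeffAt_cons, if_neg (h t (by simp)), ih (fun s hs => h s (by simp [hs]))]

lemma sumCoeffAt_pos {lam : ℕ} {T : List (ℕ × ℕ)} {s : ℕ × ℕ}
    (hs : s ∈ T) (hlam : s.1 = lam) (hc : 1 ≤ s.2) : 1 ≤ sumCoeffAt lam T := by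
  induction T with
  | nil => simp at hs
  | cons t T ih =>
      rw [sumCoeffAt_cons]
      rcases List.mem_cons.mp hs with rfl | hs
      · rw [if_pos hlam]; omega
      · have := ih hs; omega

lemma tailLT_eq_self {lam : ℕ} {T : List (ℕ × ℕ)} (h : ∀ t ∈ T, t.1 < lam) :
    tailLT lam T = T := by
  cases T with
  | nil => rfl
  | cons t T =>
      rw [tailLT, if_pos]
      rw [List.all_eq_true]
      intro s hs
      simpa using h s hs

lemma tailLT_levels {lam : ℕ} (T : List (ℕ × ℕ)) : ∀ t ∈ tailLT lam T, t.1 < lam := by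
  induction T with
  | nil => intro t h; simp [tailLT] at h
  | cons s T ih =>
      rw [tailLT]
      split
      · rename_i hall
        rw [List.all_eq_true] at hall
        intro t ht
        simpa using hall t ht
      · exact ih

lemma tailLT_mem {lam : ℕ} (T : List (ℕ × ℕ)) : ∀ t ∈ tailLT lam T, t ∈ T := by
  induction T with
  | nil => intro t h; simp [tailLT] at h
  | cons s T ih =>
      rw [tailLT]
      split
      · intro t ht; exact ht
      · intro t ht; exact List.mem_cons_of_mem _ (ih t ht)

lemma tailLT_idem {lam lam' : ℕ} (h : lam' ≤ lam) (T : List (ℕ × ℕ)) :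
    tailLT lam' (tailLT lam T) = tailLT lam' T := by
  induction T with
  | nil => rfl
  | cons t T ih =>
      rw [tailLT]
      split
      · rfl
      · rename_i hnot
        rw [ih]
        conv_rhs => rw [tailLT]
        rw [if_neg]
        intro hall
        apply hnot
        rw [List.all_eq_true] at hall ⊢
        intro s hs
        have := hall s hs
        simp only [decide_eq_true_eq] at this ⊢
        omega

lemma tailLT_append {lam : ℕ} {x : ℕ × ℕ} (A B : List (ℕ × ℕ))
    (hx : lam ≤ x.1) (hB : ∀ t ∈ B, t.1 < lam) :
    tailLT lam (A ++ x :: B) = B := by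
  induction A with
  | nil =>
      rw [List.nil_append, tailLT, if_neg, tailLT_eq_self hB]
      intro hall
      rw [List.all_eq_true] at hall
      have := hall x (by simp)
      simp only [decide_eq_true_eq] at this
      omega
  | cons a A ih =>
      rw [List.cons_append, tailLT, if_neg, ih]
      intro hall
      rw [List.all_eq_true] at hall
      have := hall x (by simp)
      simp only [decide_eq_true_eq] at this
      omega

lemma V_lt_opow {lam : ℕ} {T : List (ℕ × ℕ)} (h : ∀ t ∈ T, t.1 < lam) :
    V T < ω ^ (lam : Ordinal) := by
  induction T with
  | nil => simpa using opow_pos (b := (lam : Ordinal)) omega0_pos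
  | cons t T ih =>
      rw [V_cons]
      refine Ordinal.principal_add_omega0_opow _ ?_ (ih (fun s hs => h s (by simp [hs])))
      calc ω ^ (t.1 : Ordinal) * t.2 < ω ^ (t.1 : Ordinal) * ω :=
            mul_lt_mul_of_pos_left (Ordinal.nat_lt_omega0 _) (opow_pos _ omega0_pos)
        _ = ω ^ ((t.1 : Ordinal) + 1) := by rw [opow_add, opow_one]
        _ ≤ ω ^ (lam : Ordinal) := by
            apply opow_le_opow_right omega0_pos
            have h2 : (t.1 : Ordinal) < (lam : Ordinal) := by exact_mod_cast h t (by simp)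
            rw [Ordinal.add_one_eq_succ]
            exact Order.succ_le_iff.mpr h2

lemma scan {lam : ℕ} {T : List (ℕ × ℕ)} (hb : ∀ t ∈ T, t.1 ≤ lam) (hc : ∀ t ∈ T, 1 ≤ t.2) :
    V T = ω ^ (lam : Ordinal) * (sumCoeffAt lam T : ℕ) + V (tailLT lam T) := by
  induction T with
  | nil => simp [tailLT]
  | cons t T ih =>
      have hbT : ∀ s ∈ T, s.1 ≤ lam := fun s hs => hb s (by simp [hs])
      have hcT : ∀ s ∈ T, 1 ≤ s.2 := fun s hs => hc s (by simp [hs])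
      have ihT := ih hbT hcT
      by_cases ht : t.1 = lam
      · have htail : tailLT lam (t :: T) = tailLT lam T := by
          rw [tailLT, if_neg]
          intro hall
          rw [List.all_eq_true] at hall
          have := hall t (by simp)
          simp only [decide_eq_true_eq] at this
          omega
        rw [htail, V_cons, ihT, sumCoeffAt_cons, if_pos ht, ← add_assoc, ht]
        congr 1
        rw [← mul_add]
        congr 1
        push_cast
        ring
      · have ht' : t.1 < lam := lt_of_le_of_ne (hb t (by simp)) ht
        by_cases hall : ∀ s ∈ T, s.1 < lam
        · have : ∀ s ∈ (t :: T), s.1 < lam := by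
            intro s hs
            rcases List.mem_cons.mp hs with rfl | hs
            · exact ht'
            · exact hall s hs
          rw [tailLT_eq_self this, sumCoeffAt_eq_zero (fun s hs => Nat.ne_of_lt (this s hs))]
          simp
        · push_neg at hall
          obtain ⟨s, hsmem, hslam⟩ := hall
          have hseq : s.1 = lam := le_antisymm (hbT s hsmem) hslam
          have hKpos : 1 ≤ sumCoeffAt lam T := sumCoeffAt_pos hsmem hseq (hcT s hsmem)
          have htail : tailLT lam (t :: T) = tailLT lam T := by
            rw [tailLT, if_neg]
            intro hallb
            rw [List.all_eq_true] at hallb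
            have := hallb s (by simp [hsmem])
            simp only [decide_eq_true_eq] at this
            omega
          rw [htail, V_cons, ihT, sumCoeffAt_cons, if_neg ht, Nat.zero_add]
          apply Ordinal.add_absorp
          · calc ω ^ (t.1 : Ordinal) * t.2 < ω ^ (t.1 : Ordinal) * ω :=
                  mul_lt_mul_of_pos_left (Ordinal.nat_lt_omega0 _) (opow_pos _ omega0_pos)
              _ = ω ^ ((t.1 : Ordinal) + 1) := by rw [opow_add, opow_one]
              _ ≤ ω ^ (lam : Ordinal) := by
                  apply opow_le_opow_right omega0_pos
                  have h2 : (t.1 : Ordinal) < (lam : Ordinal) := by exact_mod_cast ht'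
                  rw [Ordinal.add_one_eq_succ]
                  exact Order.succ_le_iff.mpr h2
          · calc ω ^ (lam : Ordinal) = ω ^ (lam : Ordinal) * (1:ℕ) := by simp
              _ ≤ ω ^ (lam : Ordinal) * (sumCoeffAt lam T : ℕ) := by
                  apply mul_le_mul_right
                  exact_mod_cast hKpos
              _ ≤ _ := le_self_add

lemma uniq_decomp {lam : ℕ} {K K' : ℕ} {r r' : Ordinal}
    (h : ω ^ (lam : Ordinal) * K + r = ω ^ (lam : Ordinal) * K' + r')
    (hr : r < ω ^ (lam : Ordinal)) (hr' : r' < ω ^ (lam : Ordinal)) :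
    K = K' ∧ r = r' := by
  have hne : (ω ^ (lam : Ordinal)) ≠ 0 := (opow_pos _ omega0_pos).ne'
  have hdiv := congrArg (· / ω ^ (lam : Ordinal)) h
  rw [Ordinal.mul_add_div _ hne, Ordinal.mul_add_div _ hne,
    Ordinal.div_eq_zero_of_lt hr, Ordinal.div_eq_zero_of_lt hr', add_zero, add_zero] at hdiv
  have hK : K = K' := by exact_mod_cast hdiv
  subst hK
  exact ⟨rfl, by
    have := h
    rwa [add_left_cancel_iff] at this⟩

theorem keycnf {N : ℕ} {T T' : List (ℕ × ℕ)}
    (hbT : ∀ t ∈ T, t.1 ≤ N) (hbT' : ∀ t ∈ T', t.1 ≤ N)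
    (hcT : ∀ t ∈ T, 1 ≤ t.2) (hcT' : ∀ t ∈ T', 1 ≤ t.2)
    (hV : V T = V T') (lam : ℕ) :
    sumCoeffAt lam (tailLT (lam+1) T) = sumCoeffAt lam (tailLT (lam+1) T') := by
  have main : ∀ d lam', lam' + d = N + 1 → V (tailLT lam' T) = V (tailLT lam' T') := by
    intro d
    induction d with
    | zero =>
        intro lam' hl
        obtain rfl : lam' = N + 1 := by omega
        rw [tailLT_eq_self (fun t ht => by have := hbT t ht; omega),
          tailLT_eq_self (fun t ht => by have := hbT' t ht; omega)]
        exact hV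
    | succ d ih =>
        intro lam' hl
        have hprev := ih (lam' + 1) (by omega)
        have hS := scan (lam := lam') (T := tailLT (lam'+1) T)
          (fun t ht => by have := tailLT_levels T t ht; omega)
          (fun t ht => hcT t (tailLT_mem T t ht))
        have hS' := scan (lam := lam') (T := tailLT (lam'+1) T')
          (fun t ht => by have := tailLT_levels T' t ht; omega)
          (fun t ht => hcT' t (tailLT_mem T' t ht))
        rw [hS, hS', tailLT_idem (by omega), tailLT_idem (by omega)] at hprev
        exact (uniq_decomp hprev (V_lt_opow (tailLT_levels T)) (V_lt_opow (tailLT_levels T'))).2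
  by_cases hlam : lam ≤ N
  · have hprev := main (N - lam) (lam + 1) (by omega)
    have hS := scan (lam := lam) (T := tailLT (lam+1) T)
      (fun t ht => by have := tailLT_levels T t ht; omega)
      (fun t ht => hcT t (tailLT_mem T t ht))
    have hS' := scan (lam := lam) (T := tailLT (lam+1) T')
      (fun t ht => by have := tailLT_levels T' t ht; omega)
      (fun t ht => hcT' t (tailLT_mem T' t ht))
    rw [hS, hS'] at hprev
    exact (uniq_decomp hprev (V_lt_opow (tailLT_levels _)) (V_lt_opow (tailLT_levels _))).1
  · rw [tailLT_eq_self (fun t ht => by have := hbT t ht; omega),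
      tailLT_eq_self (fun t ht => by have := hbT' t ht; omega),
      sumCoeffAt_eq_zero (fun t ht => by have := hbT t ht; omega),
      sumCoeffAt_eq_zero (fun t ht => by have := hbT' t ht; omega)]

/- ============ probes ============ -/

universe u

def semEq (L M : List Mon) : Prop :=
  ∀ φ : ℕ → Ordinal.{u}, (∀ i, φ i < ω ^ ω) → lval φ L = lval φ M

def EB (L : List Mon) : ℕ := L.foldr (fun m n => max m.1 n) 0

lemma le_EB {L : List Mon} {m : Mon} (h : m ∈ L) : m.1 ≤ EB L := by
  induction L with
  | nil => simp at h
  | cons a L ih =>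
      rcases List.mem_cons.mp h with rfl | h
      · exact le_max_left _ _
      · exact le_trans (ih h) (le_max_right _ _)

def lcF (j y cj cy κ : ℕ) (m : Mon) : Option (ℕ × ℕ) :=
  if m.2 = j then some (m.1 + cj, κ) else if m.2 = y then some (m.1 + cy, 1) else none

def lc (j y cj cy κ : ℕ) (L : List Mon) : List (ℕ × ℕ) := L.filterMap (lcF j y cj cy κ)

@[simp] lemma lc_nil (j y cj cy κ) : lc j y cj cy κ [] = [] := rfl

lemma lc_append (j y cj cy κ) (A B : List Mon) :
    lc j y cj cy κ (A ++ B) = lc j y cj cy κ A ++ lc j y cj cy κ B :=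
  List.filterMap_append

lemma lc_cons_j (j y cj cy κ) {m : Mon} (h : m.2 = j) (L) :
    lc j y cj cy κ (m :: L) = (m.1 + cj, κ) :: lc j y cj cy κ L := by
  simp [lc, List.filterMap_cons, lcF, h]

lemma lc_cons_y (j y cj cy κ) {m : Mon} (hj : m.2 ≠ j) (hy : m.2 = y) (L) :
    lc j y cj cy κ (m :: L) = (m.1 + cy, 1) :: lc j y cj cy κ L := by
  have hyj : y ≠ j := fun h => hj (hy.trans h)
  simp [lc, List.filterMap_cons, lcF, hj, hy, hyj]

lemma lc_cons_none (j y cj cy κ) {m : Mon} (hj : m.2 ≠ j) (hy : m.2 ≠ y) (L) :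
    lc j y cj cy κ (m :: L) = lc j y cj cy κ L := by
  simp [lc, List.filterMap_cons, lcF, hj, hy]

noncomputable def probe (j y cj cy κ : ℕ) : ℕ → Ordinal.{u} :=
  fun v => if v = j then ω ^ (cj : Ordinal) * κ else if v = y then ω ^ (cy : Ordinal) else 0

lemma single_lt_omega_opow (c k : ℕ) : ω ^ (c : Ordinal) * k < ω ^ ω := by
  calc ω ^ (c : Ordinal) * k < ω ^ (c : Ordinal) * ω :=
        mul_lt_mul_of_pos_left (Ordinal.nat_lt_omega0 _) (opow_pos _ omega0_pos)
    _ = ω ^ ((c : Ordinal) + 1) := by rw [opow_add, opow_one]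
    _ ≤ ω ^ (ω : Ordinal) := by
        apply opow_le_opow_right omega0_pos
        have h2 : (c : Ordinal) < ω := Ordinal.nat_lt_omega0 c
        rw [Ordinal.add_one_eq_succ]
        exact Order.succ_le_iff.mpr h2
    _ = ω ^ ω := rfl

lemma probe_bounded (j y cj cy κ : ℕ) : ∀ i, probe j y cj cy κ i < ω ^ ω := by
  intro i
  unfold probe
  split
  · exact single_lt_omega_opow cj κ
  · split
    · simpa using single_lt_omega_opow cy 1
    · exact opow_pos _ omega0_pos

lemma pow_mul_pow_coeff (e c k : ℕ) :
    ω ^ (e : Ordinal) * (ω ^ (c : Ordinal) * k) = ω ^ ((e + c : ℕ) : Ordinal) * k := by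
  rw [← mul_assoc, ← opow_add]
  congr 2
  push_cast
  rfl

lemma lval_probe {j y : ℕ} (hjy : j ≠ y) (cj cy κ : ℕ) (L : List Mon) :
    lval (probe j y cj cy κ) L = V (lc j y cj cy κ L) := by
  induction L with
  | nil => rfl
  | cons m L ih =>
      rw [lval_cons, ih]
      by_cases hj : m.2 = j
      · rw [lc_cons_j _ _ _ _ _ hj, V_cons]
        congr 1
        show ω ^ (m.1 : Ordinal) * (probe j y cj cy κ m.2) = _
        rw [probe, if_pos hj]
        exact pow_mul_pow_coeff m.1 cj κ
      · by_cases hy : m.2 = y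
        · rw [lc_cons_y _ _ _ _ _ hj hy, V_cons]
          congr 1
          show ω ^ (m.1 : Ordinal) * (probe j y cj cy κ m.2) = _
          rw [probe, if_neg hj, if_pos hy]
          have := pow_mul_pow_coeff m.1 cy 1
          simpa using this
        · rw [lc_cons_none _ _ _ _ _ hj hy]
          show ω ^ (m.1 : Ordinal) * (probe j y cj cy κ m.2) + _ = _
          rw [probe, if_neg hj, if_neg hy, mul_zero, zero_add]

lemma lc_coeff_ge_one {j y cj cy κ : ℕ} (hκ : 1 ≤ κ) (L : List Mon) :
    ∀ t ∈ lc j y cj cy κ L, 1 ≤ t.2 := by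
  intro t ht
  obtain ⟨m, _, hm⟩ := List.mem_filterMap.mp ht
  unfold lcF at hm
  split at hm
  · cases hm; exact hκ
  · split at hm
    · cases hm; exact le_refl 1
    · cases hm

lemma lc_level_le {j y cj cy κ : ℕ} (L : List Mon) :
    ∀ t ∈ lc j y cj cy κ L, t.1 ≤ EB L + max cj cy := by
  intro t ht
  obtain ⟨m, hmL, hm⟩ := List.mem_filterMap.mp ht
  have hEB := le_EB hmL
  unfold lcF at hm
  split at hm
  · cases hm; simp; omega
  · split at hm
    · cases hm; simp; omega
    · cases hm

lemma sumCoeffAt_lc (j y cj cy κ : ℕ) (S : List Mon) (lam : ℕ) :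
    sumCoeffAt lam (lc j y cj cy κ S) =
      κ * S.countP (fun m => decide (m.2 = j ∧ m.1 + cj = lam)) +
        S.countP (fun m => decide (m.2 = y ∧ m.2 ≠ j ∧ m.1 + cy = lam)) := by
  induction S with
  | nil => simp
  | cons m S ih =>
      by_cases hj : m.2 = j
      · rw [lc_cons_j _ _ _ _ _ hj, sumCoeffAt_cons]
        rw [List.countP_cons, List.countP_cons]
        by_cases hl : m.1 + cj = lam
        · simp only [hj, hl, ih]
          simp
          ring
        · simp only [ih]
          have e1 : (if (m.1 + cj, κ).1 = lam then (m.1 + cj, κ).2 else 0) = 0 := by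
            simp [hl]
          have e2 : (decide (m.2 = j ∧ m.1 + cj = lam)) = false := by simp [hl]
          have e3 : (decide (m.2 = y ∧ m.2 ≠ j ∧ m.1 + cy = lam)) = false := by simp [hj]
          rw [e1, e2, e3]
          simp
      · by_cases hy : m.2 = y
        · rw [lc_cons_y _ _ _ _ _ hj hy, sumCoeffAt_cons]
          rw [List.countP_cons, List.countP_cons]
          by_cases hl : m.1 + cy = lam
          · have e1 : (if (m.1 + cy, 1).1 = lam then (m.1 + cy, 1).2 else 0) = 1 := by
              simp [hl]
            have e2 : (decide (m.2 = j ∧ m.1 + cj = lam)) = false := by simp [hj]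
            have hyj : y ≠ j := fun h => hj (hy.trans h)
            have e3 : (decide (m.2 = y ∧ m.2 ≠ j ∧ m.1 + cy = lam)) = true := by
              simp [hy, hj, hl, hyj]
            rw [e1, e2, e3, ih]
            simp
            ring
          · have e1 : (if (m.1 + cy, 1).1 = lam then (m.1 + cy, 1).2 else 0) = 0 := by
              simp [hl]
            have e2 : (decide (m.2 = j ∧ m.1 + cj = lam)) = false := by simp [hj]
            have e3 : (decide (m.2 = y ∧ m.2 ≠ j ∧ m.1 + cy = lam)) = false := by
              simp [hl]
            rw [e1, e2, e3, ih]
            simp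
        · rw [lc_cons_none _ _ _ _ _ hj hy]
          rw [List.countP_cons, List.countP_cons]
          have e2 : (decide (m.2 = j ∧ m.1 + cj = lam)) = false := by simp [hj]
          have e3 : (decide (m.2 = y ∧ m.2 ≠ j ∧ m.1 + cy = lam)) = false := by simp [hy]
          rw [e2, e3, ih]
          simp

/- ============ splitting and counting helpers ============ -/

def cnt (g v : ℕ) (L : List Mon) : ℕ := L.countP (fun m => decide (m.2 = v ∧ m.1 = g))

lemma cnt_append (g v : ℕ) (A B : List Mon) : cnt g v (A ++ B) = cnt g v A + cnt g v B :=
  List.countP_append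

lemma cnt_cons (g v : ℕ) (m : Mon) (L : List Mon) :
    cnt g v (m :: L) = cnt g v L + (if m.2 = v ∧ m.1 = g then 1 else 0) := by
  rw [cnt, List.countP_cons]
  by_cases h : m.2 = v ∧ m.1 = g <;> simp [cnt, h]

lemma cnt_eq_zero {g v : ℕ} {L : List Mon} (h : ∀ m ∈ L, ¬(m.2 = v ∧ m.1 = g)) :
    cnt g v L = 0 := by
  rw [cnt, List.countP_eq_zero]
  intro m hm
  simpa using h m hm

lemma cnt_pos_iff {g v : ℕ} {L : List Mon} : 0 < cnt g v L ↔ (g, v) ∈ L := by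
  rw [cnt, List.countP_pos_iff]
  constructor
  · rintro ⟨m, hm, hp⟩
    simp only [decide_eq_true_eq] at hp
    have : m = (g, v) := by
      obtain ⟨e, i⟩ := m
      simp at hp
      simp [hp]
    rwa [this] at hm
  · intro h
    exact ⟨(g, v), h, by simp⟩

lemma split_last_pred {p : Mon → Prop} [DecidablePred p] :
    ∀ {L : List Mon}, (∃ m ∈ L, p m) →
      ∃ A x S, L = A ++ x :: S ∧ p x ∧ ∀ z ∈ S, ¬ p z := by
  intro L
  induction L with
  | nil => rintro ⟨m, hm, _⟩; simp at hm
  | cons a L ih =>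
      intro h
      by_cases hL : ∃ m ∈ L, p m
      · obtain ⟨A, x, S, rfl, hx, hS⟩ := ih hL
        exact ⟨a :: A, x, S, rfl, hx, hS⟩
      · push_neg at hL
        obtain ⟨m, hm, hpm⟩ := h
        rcases List.mem_cons.mp hm with rfl | hm'
        · exact ⟨[], m, L, rfl, hpm, fun z hz => hL z hz⟩
        · exact absurd hpm (hL m hm')

lemma red_cross {L A : List Mon} {x : Mon} {S : List Mon} (hL : Red L)
    (hsplit : L = A ++ x :: S) : ∀ a ∈ A, RedRel a x := by
  subst hsplit
  rw [Red, List.pairwise_append] at hL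
  exact fun a ha => hL.2.2 a ha x (by simp)

lemma red_cross' {L A : List Mon} {x : Mon} {S : List Mon} (hL : Red L)
    (hsplit : L = A ++ x :: S) : ∀ z ∈ S, RedRel x z := by
  subst hsplit
  rw [Red, List.pairwise_append] at hL
  have := hL.2.1
  rw [List.pairwise_cons] at this
  exact this.1

lemma red_cross2 {L A : List Mon} {x : Mon} {S : List Mon} (hL : Red L)
    (hsplit : L = A ++ x :: S) : ∀ a ∈ A, ∀ z ∈ S, RedRel a z := by
  subst hsplit
  rw [Red, List.pairwise_append] at hL
  exact fun a ha z hz => hL.2.2 a ha z (by simp [hz])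

/-- computation of the level-`g+E+1` coefficient for the single-variable counting probe -/
lemma cnt_compute {L : List Mon} (hL : Red L) (E g v : ℕ) (hE : ∀ m ∈ L, m.1 ≤ E) :
    sumCoeffAt (g + E + 1) (tailLT (g + E + 2) (lc v (v+1) (E+1) 0 1 L)) = cnt g v L := by
  classical
  have hvy : v ≠ v + 1 := by omega
  by_cases hex : ∃ m ∈ L, m.2 = v ∧ g + 1 ≤ m.1
  · obtain ⟨A, x, S, hsplit, hx, hS⟩ := split_last_pred (p := fun m => m.2 = v ∧ g + 1 ≤ m.1) hex
    have hxj : x.2 = v := hx.1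
    have hlcx : lc v (v+1) (E+1) 0 1 (x :: S) = (x.1 + (E+1), 1) :: lc v (v+1) (E+1) 0 1 S :=
      lc_cons_j _ _ _ _ _ hxj _
    have htail : tailLT (g + E + 2) (lc v (v+1) (E+1) 0 1 L) = lc v (v+1) (E+1) 0 1 S := by
      rw [hsplit, lc_append, hlcx]
      apply tailLT_append
      · show g + E + 2 ≤ x.1 + (E + 1)
        have := hx.2
        omega
      · intro t ht
        obtain ⟨m, hmS, hm⟩ := List.mem_filterMap.mp ht
        have hmL : m ∈ L := by rw [hsplit]; simp [hmS]
        have hmE := hE m hmL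
        unfold lcF at hm
        split at hm
        · rename_i hmv
          cases hm
          have : ¬ (m.2 = v ∧ g + 1 ≤ m.1) := hS m hmS
          simp only [hmv, true_and, not_le] at this
          omega
        · split at hm
          · cases hm
            simp
            omega
          · cases hm
    rw [htail, sumCoeffAt_lc]
    have hy0 : S.countP (fun m => decide (m.2 = v+1 ∧ m.2 ≠ v ∧ m.1 + 0 = g + E + 1)) = 0 := by
      rw [List.countP_eq_zero]
      intro m hmS
      have hmL : m ∈ L := by rw [hsplit]; simp [hmS]
      have := hE m hmL
      simp only [decide_eq_true_eq, not_and]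
      intro _ _
      omega
    rw [hy0, Nat.add_zero, Nat.one_mul]
    have hcntS : S.countP (fun m => decide (m.2 = v ∧ m.1 + (E+1) = g + E + 1)) = cnt g v S := by
      apply List.countP_congr
      intro m _
      simp only [decide_eq_true_eq, cnt]
      constructor <;> (intro h; exact ⟨h.1, by omega⟩)
    rw [hcntS, hsplit, cnt_append, cnt_cons]
    have hA0 : cnt g v A = 0 := by
      apply cnt_eq_zero
      intro a ha hcond
      have hrel := red_cross hL hsplit a ha
      have := hrel (hcond.1.trans hxj.symm)
      have := hx.2
      omega
    have hx0 : ¬ (x.2 = v ∧ x.1 = g) := by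
      intro h
      have := hx.2
      omega
    rw [hA0, if_neg hx0]
    omega
  · push_neg at hex
    have hself : tailLT (g + E + 2) (lc v (v+1) (E+1) 0 1 L) = lc v (v+1) (E+1) 0 1 L := by
      apply tailLT_eq_self
      intro t ht
      obtain ⟨m, hmL, hm⟩ := List.mem_filterMap.mp ht
      have hmE := hE m hmL
      unfold lcF at hm
      split at hm
      · rename_i hmv
        cases hm
        have := hex m hmL hmv
        simp
        omega
      · split at hm
        · cases hm
          simp
          omega
        · cases hm
    rw [hself, sumCoeffAt_lc]
    have hy0 : L.countP (fun m => decide (m.2 = v+1 ∧ m.2 ≠ v ∧ m.1 + 0 = g + E + 1)) = 0 := by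
      rw [List.countP_eq_zero]
      intro m hmL
      have := hE m hmL
      simp only [decide_eq_true_eq, not_and]
      intro _ _
      omega
    rw [hy0, Nat.add_zero, Nat.one_mul]
    apply List.countP_congr
    intro m _
    simp only [decide_eq_true_eq, cnt]
    constructor <;> (intro h; exact ⟨h.1, by omega⟩)

lemma cnt_eq_of_semEq {L M : List Mon} (hL : Red L) (hM : Red M) (h : semEq L M)
    (g v : ℕ) : cnt g v L = cnt g v M := by
  classical
  set E := max (EB L) (EB M) with hE
  have hEL : ∀ m ∈ L, m.1 ≤ E := fun m hm => le_trans (le_EB hm) (le_max_left _ _)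
  have hEM : ∀ m ∈ M, m.1 ≤ E := fun m hm => le_trans (le_EB hm) (le_max_right _ _)
  have hvy : v ≠ v + 1 := by omega
  have hVeq : V (lc v (v+1) (E+1) 0 1 L) = V (lc v (v+1) (E+1) 0 1 M) := by
    rw [← lval_probe hvy, ← lval_probe hvy]
    exact h _ (probe_bounded _ _ _ _ _)
  have hkey := keycnf (N := E + (E + 1))
    (fun t ht => le_trans (lc_level_le L t ht) (by simp; omega))
    (fun t ht => le_trans (lc_level_le M t ht) (by simp; omega))
    (lc_coeff_ge_one (le_refl 1) L) (lc_coeff_ge_one (le_refl 1) M)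
    hVeq (g + E + 1)
  have e2 : g + E + 1 + 1 = g + E + 2 := by omega
  rw [e2] at hkey
  rw [cnt_compute hL E g v hEL, cnt_compute hM E g v hEM] at hkey
  exact hkey

/- ============ the two probe-contradiction lemmas ============ -/

lemma nat_decode {κ a b r r' : ℕ} (h : κ * a + r = κ * b + r') (hr : r < κ) (hr' : r' < κ) :
    a = b ∧ r = r' := by
  have hκ : 0 < κ := by omega
  have ha : (κ * a + r) / κ = a := by
    rw [Nat.mul_add_div hκ, Nat.div_eq_of_lt hr, Nat.add_zero]
  have hb : (κ * b + r') / κ = b := by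
    rw [Nat.mul_add_div hκ, Nat.div_eq_of_lt hr', Nat.add_zero]
  have hab : a = b := by rw [← ha, ← hb, h]
  subst hab
  exact ⟨rfl, by omega⟩

lemma cnt_le_length (g v : ℕ) (L : List Mon) : cnt g v L ≤ L.length :=
  List.countP_le_length

lemma countP_le_length' (p : Mon → Bool) (L : List Mon) : L.countP p ≤ L.length :=
  List.countP_le_length

lemma maxj_of_counts {L M' : List Mon} {f j : ℕ} (hM : Red ((f,j) :: M'))
    (hcnt : ∀ g v, cnt g v L = cnt g v ((f,j) :: M')) :
    ∀ m ∈ L, m.2 = j → m.1 ≤ f := by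
  intro m hm hmj
  have hmem : (m.1, j) ∈ L := by
    have : m = (m.1, j) := by rw [← hmj]
    rwa [← this]
  have h1 : 0 < cnt m.1 j ((f,j) :: M') := by
    rw [← hcnt]
    exact cnt_pos_iff.mpr hmem
  have h2 : (m.1, j) ∈ (f,j) :: M' := cnt_pos_iff.mp h1
  rcases List.mem_cons.mp h2 with heq | hmem'
  · have : m.1 = f := congrArg Prod.fst heq
    omega
  · have hrel := (List.pairwise_cons.mp hM).1 (m.1, j) hmem'
    exact hrel rfl

lemma mem_of_counts {L M : List Mon} (hcnt : ∀ g v, cnt g v L = cnt g v M)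
    {g v : ℕ} (h : (g, v) ∈ L) : (g, v) ∈ M := by
  have h1 : 0 < cnt g v M := by rw [← hcnt]; exact cnt_pos_iff.mpr h
  exact cnt_pos_iff.mp h1

/-- C1: some `(h,y)` with `y ≠ j` closes (in `L`) before all copies of `B = (f,j)`,
    while `B` is the head of `M`.  This contradicts `semEq`. -/
lemma c1_contra {L M' : List Mon} {f j h y : ℕ}
    (hL : Red L) (hM : Red ((f,j) :: M'))
    (hsem : semEq L ((f,j) :: M'))
    (hyj : y ≠ j)
    {P S : List Mon}
    (hsplit : L = P ++ (h,y) :: S)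
    (hSy : ∀ m ∈ S, m.2 = y → m.1 < h)
    (hBP : (f,j) ∉ P)
    (hBL : (f,j) ∈ L) : False := by
  classical
  set M : List Mon := (f,j) :: M' with hMdef
  have hcnt : ∀ g v, cnt g v L = cnt g v M := fun g v => cnt_eq_of_semEq hL hM hsem g v
  have hmaxjL : ∀ m ∈ L, m.2 = j → m.1 ≤ f := maxj_of_counts hM hcnt
  have hmaxjM : ∀ m ∈ M, m.2 = j → m.1 ≤ f := by
    intro m hm hmj
    rcases List.mem_cons.mp hm with rfl | hm'
    · rfl
    · exact (List.pairwise_cons.mp hM).1 m hm' (by rw [hmj])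
  set κ : ℕ := L.length + M.length + 1 with hκdef
  have hκ1 : 1 ≤ κ := by omega
  -- probe: cj = h, cy = f+1 ;  levels : (g,y) ↦ g+f+1, (g'',j) ↦ g''+h
  set c : ℕ := h + f with hcdef
  have hVeq : V (lc j y h (f+1) κ L) = V (lc j y h (f+1) κ M) := by
    rw [← lval_probe (Ne.symm hyj), ← lval_probe (Ne.symm hyj)]
    exact hsem _ (probe_bounded _ _ _ _ _)
  set N : ℕ := max (EB L) (EB M) + max h (f+1) with hNdef
  have hkey := keycnf (N := N)
    (fun t ht => le_trans (lc_level_le L t ht)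
      (by simp only [hNdef]; exact Nat.add_le_add (le_max_left _ _) (le_refl _)))
    (fun t ht => le_trans (lc_level_le M t ht)
      (by simp only [hNdef]; exact Nat.add_le_add (le_max_right _ _) (le_refl _)))
    (lc_coeff_ge_one hκ1 L) (lc_coeff_ge_one hκ1 M)
    hVeq c
  -- L side
  have hSlev : ∀ t ∈ lc j y h (f+1) κ S, t.1 < c + 1 := by
    intro t ht
    obtain ⟨m, hmS, hm⟩ := List.mem_filterMap.mp ht
    have hmL : m ∈ L := by rw [hsplit]; simp [hmS]
    unfold lcF at hm
    split at hm
    · rename_i hmj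
      cases hm
      have := hmaxjL m hmL hmj
      show m.1 + h < c + 1
      simp only [hcdef]; omega
    · split at hm
      · rename_i hmj hmy
        cases hm
        have := hSy m hmS hmy
        show m.1 + (f+1) < c + 1
        simp only [hcdef]; omega
      · cases hm
  have htailL : tailLT (c+1) (lc j y h (f+1) κ L) = lc j y h (f+1) κ S := by
    rw [hsplit, lc_append,
      lc_cons_y j y h (f+1) κ (m := ((h,y):Mon)) (by simpa using hyj) rfl S]
    exact tailLT_append _ _ (by simp only [hcdef]; omega) hSlev
  -- M side : split M at the last y-entry with exponent ≥ h
  have hhyL : (h, y) ∈ L := by rw [hsplit]; simp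
  have hhyM : (h, y) ∈ M := mem_of_counts hcnt hhyL
  have hexM : ∃ m ∈ M, m.2 = y ∧ h ≤ m.1 := ⟨(h,y), hhyM, rfl, le_refl h⟩
  obtain ⟨A, x, S₂, hMsplit, hx, hS₂⟩ :=
    split_last_pred (p := fun m => m.2 = y ∧ h ≤ m.1) hexM
  have hS₂lev : ∀ t ∈ lc j y h (f+1) κ S₂, t.1 < c + 1 := by
    intro t ht
    obtain ⟨m, hmS, hm⟩ := List.mem_filterMap.mp ht
    have hmM : m ∈ M := by rw [hMsplit]; simp [hmS]
    unfold lcF at hm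
    split at hm
    · rename_i hmj
      cases hm
      have := hmaxjM m hmM hmj
      show m.1 + h < c + 1
      simp only [hcdef]; omega
    · split at hm
      · rename_i hmj hmy
        cases hm
        have := hS₂ m hmS
        simp only [hmy, true_and, not_le] at this
        show m.1 + (f+1) < c + 1
        simp only [hcdef]; omega
      · cases hm
  have htailM : tailLT (c+1) (lc j y h (f+1) κ M) = lc j y h (f+1) κ S₂ := by
    rw [hMsplit, lc_append,
      lc_cons_y j y h (f+1) κ (m := x) (by rw [hx.1]; exact hyj) hx.1 S₂]
    refine tailLT_append _ _ ?_ hS₂lev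
    show c + 1 ≤ x.1 + (f+1)
    have := hx.2
    simp only [hcdef]; omega
  rw [htailL, htailM, sumCoeffAt_lc, sumCoeffAt_lc] at hkey
  -- identify countP's with cnt's
  have hjS : S.countP (fun m => decide (m.2 = j ∧ m.1 + h = c)) = cnt f j S := by
    apply List.countP_congr
    intro m _
    simp only [decide_eq_true_eq, cnt, hcdef]
    constructor <;> (intro hh; exact ⟨hh.1, by omega⟩)
  have hjS₂ : S₂.countP (fun m => decide (m.2 = j ∧ m.1 + h = c)) = cnt f j S₂ := by
    apply List.countP_congr
    intro m _
    simp only [decide_eq_true_eq, cnt, hcdef]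
    constructor <;> (intro hh; exact ⟨hh.1, by omega⟩)
  rw [hjS, hjS₂] at hkey
  -- counts: all copies of (f,j) in L are inside S
  have hfjS : cnt f j S = cnt f j L := by
    rw [hsplit, cnt_append, cnt_cons]
    have h1 : cnt f j P = 0 := by
      apply cnt_eq_zero
      intro m hm hc
      apply hBP
      have : m = (f, j) := by
        obtain ⟨e, i⟩ := m
        simp at hc
        simp [hc]
      rwa [this] at hm
    rw [h1]
    have h2 : ¬ ((h,y).2 = j ∧ (h,y).1 = f) := by simp [hyj]
    rw [if_neg h2]
    omega
  -- in M, the head (f,j) is in A (since x has variable y ≠ j)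
  have hAne : A ≠ [] := by
    intro hA
    rw [hA, List.nil_append] at hMsplit
    have : (f,j) = x := by
      have h3 := hMsplit
      rw [hMdef] at h3
      injection h3.symm with h1 h2
      exact h1.symm
    rw [← this] at hx
    exact hyj hx.1.symm
  obtain ⟨A', hA'⟩ : ∃ A', A = (f,j) :: A' := by
    cases A with
    | nil => exact absurd rfl hAne
    | cons a A' =>
        have : a = (f,j) := by
          have h3 := hMsplit
          rw [hMdef] at h3
          injection h3 with h1 h2
          exact h1.symm
        exact ⟨A', by rw [this]⟩
  have hfjS₂ : cnt f j S₂ + 1 ≤ cnt f j M := by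
    rw [hMsplit, hA', cnt_append, cnt_cons, cnt_cons]
    have : (((f,j)):Mon).2 = j ∧ (((f,j)):Mon).1 = f := by simp
    rw [if_pos this]
    omega
  have hmB : cnt f j L = cnt f j M := hcnt f j
  have hmBpos : 1 ≤ cnt f j L := cnt_pos_iff.mpr hBL
  -- bounds on the small parts
  have hrL : S.countP (fun m => decide (m.2 = y ∧ m.2 ≠ j ∧ m.1 + (f+1) = c)) < κ := by
    calc _ ≤ S.length := countP_le_length' _ _
      _ < κ := by
        have : S.length ≤ L.length := by rw [hsplit]; simp; omega
        omega
  have hrM : S₂.countP (fun m => decide (m.2 = y ∧ m.2 ≠ j ∧ m.1 + (f+1) = c)) < κ := by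
    calc _ ≤ S₂.length := countP_le_length' _ _
      _ < κ := by
        have : S₂.length ≤ M.length := by rw [hMsplit]; simp; omega
        omega
  -- final contradiction : κ * mB + r = κ * b + r' with b + 1 ≤ mB
  set b := cnt f j S₂
  have hble : b + 1 ≤ cnt f j L := by omega
  rw [hfjS] at hkey
  have hmul : κ * (b+1) ≤ κ * cnt f j L := Nat.mul_le_mul_left κ hble
  rw [Nat.mul_add, Nat.mul_one] at hmul
  omega

/-- C2: in `L` the unique copy of `B = (f,j)` is preceded by a nonempty prefix,
    while `B` is the head of `M`.  This contradicts `semEq`. -/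
lemma c2_contra {L M' : List Mon} {f j : ℕ}
    (hL : Red L) (hM : Red ((f,j) :: M'))
    (hsem : semEq L ((f,j) :: M'))
    {P S : List Mon}
    (hsplit : L = P ++ (f,j) :: S)
    (hPne : P ≠ [])
    (hcnt1 : cnt f j L = 1) : False := by
  classical
  set M : List Mon := (f,j) :: M' with hMdef
  have hcnt : ∀ g v, cnt g v L = cnt g v M := fun g v => cnt_eq_of_semEq hL hM hsem g v
  have hmaxjL : ∀ m ∈ L, m.2 = j → m.1 ≤ f := maxj_of_counts hM hcnt
  have hmaxjM : ∀ m ∈ M, m.2 = j → m.1 ≤ f := by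
    intro m hm hmj
    rcases List.mem_cons.mp hm with rfl | hm'
    · rfl
    · exact (List.pairwise_cons.mp hM).1 m hm' (by rw [hmj])
  -- last element of P
  rcases (List.eq_nil_or_concat P) with rfl | ⟨P', Ylast, hPc⟩
  · exact hPne rfl
  rw [List.concat_eq_append] at hPc
  subst hPc
  set h : ℕ := Ylast.1 with hhdef
  set y : ℕ := Ylast.2 with hydef
  have hYeta : Ylast = (h, y) := rfl
  have hsplit' : L = P' ++ (h,y) :: ((f,j) :: S) := by
    rw [hsplit, hYeta]
    simp
  -- facts about the split
  have hYP : (h,y) ∈ P' ++ [Ylast] := by rw [hYeta]; simp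
  have hfjPS : cnt f j (P' ++ [Ylast]) = 0 ∧ cnt f j S = 0 := by
    have hdec : cnt f j L = cnt f j (P' ++ [Ylast]) + (1 + cnt f j S) := by
      rw [hsplit, cnt_append, cnt_cons]
      simp
      omega
    constructor <;> omega
  -- y ≠ j
  have hyj : y ≠ j := by
    intro hyjeq
    have hrel : RedRel (h,y) (f,j) := red_cross hL hsplit (h,y) hYP
    have h1 : f ≤ h := hrel (by simp [hyjeq])
    have h2 : h ≤ f := hmaxjL (h,y) (by rw [hsplit]; simp [hYP, hYeta]) (by simp [hyjeq])
    have h3 : (h, y) = ((f, j) : Mon) := by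
      have : h = f := le_antisymm h2 h1
      simp [this, hyjeq]
    have : 0 < cnt f j (P' ++ [Ylast]) := by
      apply cnt_pos_iff.mpr
      rw [← h3]
      exact hYP
    omega
  have hYL : (h, y) ∈ L := by rw [hsplit]; simp [hYP, hYeta]
  -- the y-exponents appearing after (h,y) in L are ≤ h
  have hSyle : ∀ m ∈ (f,j) :: S, m.2 = y → m.1 ≤ h := by
    intro m hm hmy
    exact red_cross' hL hsplit' m hm hmy.symm
  set κ : ℕ := L.length + M.length + 1 with hκdef
  have hκ1 : 1 ≤ κ := by omega
  have hVeq : V (lc j y (h+1) f κ L) = V (lc j y (h+1) f κ M) := by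
    rw [← lval_probe (Ne.symm hyj), ← lval_probe (Ne.symm hyj)]
    exact hsem _ (probe_bounded _ _ _ _ _)
  set N : ℕ := max (EB L) (EB M) + max (h+1) f with hNdef
  have hkeyf : ∀ lam, sumCoeffAt lam (tailLT (lam+1) (lc j y (h+1) f κ L)) =
      sumCoeffAt lam (tailLT (lam+1) (lc j y (h+1) f κ M)) :=
    keycnf (N := N)
      (fun t ht => le_trans (lc_level_le L t ht)
        (by simp only [hNdef]; exact Nat.add_le_add (le_max_left _ _) (le_refl _)))
      (fun t ht => le_trans (lc_level_le M t ht)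
        (by simp only [hNdef]; exact Nat.add_le_add (le_max_right _ _) (le_refl _)))
      (lc_coeff_ge_one hκ1 L) (lc_coeff_ge_one hκ1 M)
      hVeq
  by_cases hexq : ∃ m ∈ L, m.2 = y ∧ h + 2 ≤ m.1
  · -- CASE (i)
    have hkey := hkeyf (f+h+1)
    have e1 : f + h + 1 + 1 = f + h + 2 := by omega
    rw [e1] at hkey
    -- the q-elements of L are in P'
    have hqP' : ∀ m ∈ L, (m.2 = y ∧ h + 2 ≤ m.1) → m ∈ P' := by
      intro m hm hq
      rw [hsplit'] at hm
      rcases List.mem_append.mp hm with hm' | hm'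
      · exact hm'
      · rcases List.mem_cons.mp hm' with rfl | hm''
        · exact absurd hq.2 (by simp)
        · have := hSyle m hm'' hq.1
          omega
    obtain ⟨m₀, hm₀L, hm₀q⟩ := hexq
    have hexP' : ∃ m ∈ P', m.2 = y ∧ h + 2 ≤ m.1 := ⟨m₀, hqP' m₀ hm₀L hm₀q, hm₀q⟩
    obtain ⟨P₁, z, P₂, hP'split, hz, hP₂⟩ :=
      split_last_pred (p := fun m => m.2 = y ∧ h + 2 ≤ m.1) hexP'
    set S₂' : List Mon := P₂ ++ (h,y) :: (f,j) :: S with hS₂'def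
    have hLsplit2 : L = P₁ ++ z :: S₂' := by
      rw [hsplit', hP'split, hS₂'def]
      simp
    have hS₂'mem : ∀ m ∈ S₂', m ∈ L := by
      intro m hm
      rw [hLsplit2]
      simp [hm]
    have hS₂'noq : ∀ m ∈ S₂', ¬ (m.2 = y ∧ h + 2 ≤ m.1) := by
      intro m hm
      rw [hS₂'def] at hm
      rcases List.mem_append.mp hm with hm' | hm'
      · exact hP₂ m hm'
      · rcases List.mem_cons.mp hm' with rfl | hm''
        · simp
        · intro hq
          have := hSyle m hm'' hq.1
          omega
    have htailL : tailLT (f+h+2) (lc j y (h+1) f κ L) = lc j y (h+1) f κ S₂' := by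
      rw [hLsplit2, lc_append,
        lc_cons_y j y (h+1) f κ (m := z) (by rw [hz.1]; exact hyj) hz.1 S₂']
      refine tailLT_append _ _ ?_ ?_
      · show f + h + 2 ≤ z.1 + f
        have := hz.2
        omega
      · intro t ht
        obtain ⟨m, hmS, hm⟩ := List.mem_filterMap.mp ht
        have hmL : m ∈ L := hS₂'mem m hmS
        unfold lcF at hm
        split at hm
        · rename_i hmj
          cases hm
          have := hmaxjL m hmL hmj
          show m.1 + (h+1) < f + h + 2
          omega
        · split at hm
          · rename_i hmj hmy
            cases hm
            have := hS₂'noq m hmS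
            simp only [hmy, true_and, not_le] at this
            show m.1 + f < f + h + 2
            omega
          · cases hm
    -- M side
    have hzL : (z.1, y) ∈ L := by
      have : z = (z.1, y) := by rw [← hz.1]
      rw [← this]
      rw [hLsplit2]; simp
    have hzM : (z.1, y) ∈ M := mem_of_counts hcnt hzL
    have hexM : ∃ m ∈ M, m.2 = y ∧ h + 2 ≤ m.1 := ⟨(z.1, y), hzM, rfl, hz.2⟩
    obtain ⟨A₃, w, S₃, hMsplit, hw, hS₃⟩ :=
      split_last_pred (p := fun m => m.2 = y ∧ h + 2 ≤ m.1) hexM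
    obtain ⟨A₃', hA₃'⟩ : ∃ A₃', A₃ = (f,j) :: A₃' := by
      cases A₃ with
      | nil =>
          exfalso
          have h3 := hMsplit
          rw [hMdef, List.nil_append] at h3
          injection h3 with h1 h2
          rw [← h1] at hw
          exact hyj hw.1.symm
      | cons a A₃' =>
          have h3 := hMsplit
          rw [hMdef] at h3
          injection h3 with h1 h2
          exact ⟨A₃', by rw [h1]⟩
    have htailM : tailLT (f+h+2) (lc j y (h+1) f κ M) = lc j y (h+1) f κ S₃ := by
      rw [hMsplit, lc_append,
        lc_cons_y j y (h+1) f κ (m := w) (by rw [hw.1]; exact hyj) hw.1 S₃]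
      refine tailLT_append _ _ ?_ ?_
      · show f + h + 2 ≤ w.1 + f
        have := hw.2
        omega
      · intro t ht
        obtain ⟨m, hmS, hm⟩ := List.mem_filterMap.mp ht
        have hmM : m ∈ M := by rw [hMsplit]; simp [hmS]
        unfold lcF at hm
        split at hm
        · rename_i hmj
          cases hm
          have := hmaxjM m hmM hmj
          show m.1 + (h+1) < f + h + 2
          omega
        · split at hm
          · rename_i hmj hmy
            cases hm
            have := hS₃ m hmS
            simp only [hmy, true_and, not_le] at this
            show m.1 + f < f + h + 2
            omega
          · cases hm
    rw [htailL, htailM, sumCoeffAt_lc, sumCoeffAt_lc] at hkey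
    have hjconv : ∀ T : List Mon,
        T.countP (fun m => decide (m.2 = j ∧ m.1 + (h+1) = f+h+1)) = cnt f j T := by
      intro T
      apply List.countP_congr
      intro m _
      simp only [decide_eq_true_eq, cnt]
      constructor <;> (intro hh; exact ⟨hh.1, by omega⟩)
    have hyconv : ∀ T : List Mon,
        T.countP (fun m => decide (m.2 = y ∧ m.2 ≠ j ∧ m.1 + f = f+h+1)) = cnt (h+1) y T := by
      intro T
      apply List.countP_congr
      intro m _
      simp only [decide_eq_true_eq, cnt]
      constructor
      · intro hh; exact ⟨hh.1, by omega⟩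
      · intro hh
        refine ⟨hh.1, ?_, by omega⟩
        rw [hh.1]; exact hyj
    rw [hjconv, hjconv, hyconv, hyconv] at hkey
    -- cnt f j S₂' = 1, cnt f j S₃ = 0
    have hfjS₂' : cnt f j S₂' = 1 := by
      have hpos : 0 < cnt f j S₂' := cnt_pos_iff.mpr (by rw [hS₂'def]; simp)
      have hdec : cnt f j L = cnt f j P₁ + (cnt f j S₂' +
          (if z.2 = j ∧ z.1 = f then 1 else 0)) := by
        rw [hLsplit2, cnt_append, cnt_cons]
      omega
    have hfjS₃ : cnt f j S₃ = 0 := by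
      have hM1 : cnt f j M = 1 := by rw [← hcnt]; exact hcnt1
      have hdec : cnt f j M = cnt f j A₃ + (cnt f j S₃ +
          (if w.2 = j ∧ w.1 = f then 1 else 0)) := by
        rw [hMsplit, cnt_append, cnt_cons]
      have hposA : 0 < cnt f j A₃ := cnt_pos_iff.mpr (by rw [hA₃']; simp)
      omega
    -- cnt (h+1) y S₂' = cnt (h+1) y L ; cnt (h+1) y S₃ = cnt (h+1) y M
    have hyL : cnt (h+1) y S₂' = cnt (h+1) y L := by
      have hzero : cnt (h+1) y P₁ = 0 := by
        apply cnt_eq_zero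
        intro a ha hc
        have hrel := red_cross hL hLsplit2 a ha
        have := hrel (by rw [hc.1, hz.1])
        have := hz.2
        omega
      have hzne : ¬ (z.2 = y ∧ z.1 = h+1) := by
        intro hc
        have := hz.2
        omega
      have hdec : cnt (h+1) y L = cnt (h+1) y P₁ + (cnt (h+1) y S₂' +
          (if z.2 = y ∧ z.1 = h+1 then 1 else 0)) := by
        rw [hLsplit2, cnt_append, cnt_cons]
      rw [hzero, if_neg hzne] at hdec
      omega
    have hyM : cnt (h+1) y S₃ = cnt (h+1) y M := by
      have hzero : cnt (h+1) y A₃ = 0 := by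
        apply cnt_eq_zero
        intro a ha hc
        have hrel := red_cross hM hMsplit a ha
        have := hrel (by rw [hc.1, hw.1])
        have := hw.2
        omega
      have hwne : ¬ (w.2 = y ∧ w.1 = h+1) := by
        intro hc
        have := hw.2
        omega
      have hdec : cnt (h+1) y M = cnt (h+1) y A₃ + (cnt (h+1) y S₃ +
          (if w.2 = y ∧ w.1 = h+1 then 1 else 0)) := by
        rw [hMsplit, cnt_append, cnt_cons]
      rw [hzero, if_neg hwne] at hdec
      omega
    rw [hfjS₂', hfjS₃, hyL, hyM, hcnt (h+1) y] at hkey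
    omega
  · -- CASE (ii) : no y-exponent ≥ h+2 anywhere
    push_neg at hexq
    have hyleL : ∀ m ∈ L, m.2 = y → m.1 ≤ h + 1 := by
      intro m hm hmy
      have := hexq m hm hmy
      omega
    have hyleM : ∀ m ∈ M, m.2 = y → m.1 ≤ h + 1 := by
      intro m hm hmy
      have hmem : (m.1, y) ∈ M := by
        have : m = (m.1, y) := by rw [← hmy]
        rwa [← this]
      have hmemL : (m.1, y) ∈ L := by
        have h1 : 0 < cnt m.1 y L := by
          rw [hcnt]
          exact cnt_pos_iff.mpr hmem
        exact cnt_pos_iff.mp h1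
      exact hyleL (m.1, y) hmemL rfl
    have hkey := hkeyf (f+h)
    have e1 : f + h + 1 = f + h + 1 := rfl
    -- L side: split at B
    have hfjSz : cnt f j S = 0 := hfjPS.2
    have htailL : tailLT (f+h+1) (lc j y (h+1) f κ L) = lc j y (h+1) f κ S := by
      rw [hsplit, lc_append,
        lc_cons_j j y (h+1) f κ (m := ((f,j):Mon)) rfl S]
      refine tailLT_append _ _ (by show f + h + 1 ≤ f + (h+1); omega) ?_
      intro t ht
      obtain ⟨m, hmS, hm⟩ := List.mem_filterMap.mp ht
      have hmL : m ∈ L := by rw [hsplit]; simp [hmS]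
      unfold lcF at hm
      split at hm
      · rename_i hmj
        cases hm
        have h1 := hmaxjL m hmL hmj
        have h2 : m.1 ≠ f := by
          intro hc
          have : 0 < cnt f j S := by
            apply cnt_pos_iff.mpr
            have : m = (f, j) := by
              obtain ⟨e, i⟩ := m
              simp at hmj hc
              simp [hmj, hc]
            rwa [this] at hmS
          omega
        show m.1 + (h+1) < f + h + 1
        omega
      · split at hm
        · rename_i hmj hmy
          cases hm
          have := hSyle m (by simp [hmS]) hmy
          show m.1 + f < f + h + 1
          omega
        · cases hm
    -- M side : split at the last element which is (f,j) or (h+1,y)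
    have hexM : ∃ m ∈ M, (m.2 = j ∧ m.1 = f) ∨ (m.2 = y ∧ m.1 = h+1) :=
      ⟨(f,j), by rw [hMdef]; simp, Or.inl ⟨rfl, rfl⟩⟩
    obtain ⟨A₄, w, S₄, hMsplit, hw, hS₄⟩ :=
      split_last_pred (p := fun m => (m.2 = j ∧ m.1 = f) ∨ (m.2 = y ∧ m.1 = h+1)) hexM
    have hS₄lev : ∀ t ∈ lc j y (h+1) f κ S₄, t.1 < f + h + 1 := by
      intro t ht
      obtain ⟨m, hmS, hm⟩ := List.mem_filterMap.mp ht
      have hmM : m ∈ M := by rw [hMsplit]; simp [hmS]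
      unfold lcF at hm
      split at hm
      · rename_i hmj
        cases hm
        have h1 := hmaxjM m hmM hmj
        have h2 : m.1 ≠ f := fun hc => hS₄ m hmS (Or.inl ⟨hmj, hc⟩)
        show m.1 + (h+1) < f + h + 1
        omega
      · split at hm
        · rename_i hmj hmy
          cases hm
          have h1 := hyleM m hmM hmy
          have h2 : m.1 ≠ h+1 := fun hc => hS₄ m hmS (Or.inr ⟨hmy, hc⟩)
          show m.1 + f < f + h + 1
          omega
        · cases hm
    have htailM : tailLT (f+h+1) (lc j y (h+1) f κ M) = lc j y (h+1) f κ S₄ := by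
      rw [hMsplit, lc_append]
      rcases hw with hwj | hwy
      · rw [lc_cons_j j y (h+1) f κ (m := w) hwj.1 S₄]
        refine tailLT_append _ _ ?_ hS₄lev
        show f + h + 1 ≤ w.1 + (h+1)
        omega
      · rw [lc_cons_y j y (h+1) f κ (m := w) (by rw [hwy.1]; exact hyj) hwy.1 S₄]
        refine tailLT_append _ _ ?_ hS₄lev
        show f + h + 1 ≤ w.1 + f
        omega
    rw [htailL, htailM, sumCoeffAt_lc, sumCoeffAt_lc] at hkey
    have hyconv : ∀ T : List Mon,
        T.countP (fun m => decide (m.2 = y ∧ m.2 ≠ j ∧ m.1 + f = f+h)) = cnt h y T := by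
      intro T
      apply List.countP_congr
      intro m _
      simp only [decide_eq_true_eq, cnt]
      constructor
      · intro hh; exact ⟨hh.1, by omega⟩
      · intro hh
        refine ⟨hh.1, ?_, by omega⟩
        rw [hh.1]; exact hyj
    rw [hyconv, hyconv] at hkey
    -- cnt h y S₄ = cnt h y M ; cnt h y S ≤ cnt h y L - 1
    have hyS₄ : cnt h y S₄ = cnt h y M := by
      have hzero : cnt h y A₄ = 0 := by
        apply cnt_eq_zero
        intro a ha hc
        rcases hw with hwj | hwy
        · -- w is the head copy of (f,j) : A₄ must be empty
          have hweq : w = (f,j) := by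
            obtain ⟨e, i⟩ := w
            simp at hwj
            simp [hwj]
          obtain ⟨A₄', hA₄'⟩ : ∃ A₄', A₄ = (f,j) :: A₄' := by
            cases A₄ with
            | nil => simp at ha
            | cons a' A₄' =>
                have h3 := hMsplit
                rw [hMdef] at h3
                injection h3 with h1 h2
                exact ⟨A₄', by rw [h1]⟩
          have : 2 ≤ cnt f j M := by
            have hdec : cnt f j M = cnt f j A₄ + (cnt f j S₄ +
                (if w.2 = j ∧ w.1 = f then 1 else 0)) := by
              rw [hMsplit, cnt_append, cnt_cons]
            have hposA : 0 < cnt f j A₄ := cnt_pos_iff.mpr (by rw [hA₄']; simp)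
            rw [if_pos hwj] at hdec
            omega
          have hM1 : cnt f j M = 1 := by rw [← hcnt]; exact hcnt1
          omega
        · have hrel := red_cross hM hMsplit a ha
          have := hrel (by rw [hc.1, hwy.1])
          omega
      have hwne : ¬ (w.2 = y ∧ w.1 = h) := by
        intro hc
        rcases hw with hwj | hwy
        · exact hyj (hc.1.symm.trans hwj.1)
        · omega
      have hdec : cnt h y M = cnt h y A₄ + (cnt h y S₄ +
          (if w.2 = y ∧ w.1 = h then 1 else 0)) := by
        rw [hMsplit, cnt_append, cnt_cons]
      rw [hzero, if_neg hwne] at hdec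
      omega
    have hySle : cnt h y S + 1 ≤ cnt h y L := by
      have hposP : 0 < cnt h y (P' ++ [Ylast]) := cnt_pos_iff.mpr hYP
      have hdec : cnt h y L = cnt h y (P' ++ [Ylast]) + (cnt h y S +
          (if ((f,j):Mon).2 = y ∧ ((f,j):Mon).1 = h then 1 else 0)) := by
        rw [hsplit, cnt_append, cnt_cons]
      omega
    -- bounds and final contradiction
    have hb1 : cnt h y S < κ := by
      calc cnt h y S ≤ S.length := cnt_le_length _ _ _
        _ < κ := by
          have : S.length ≤ L.length := by rw [hsplit]; simp; omega
          omega
    have hb2 : cnt h y S₄ < κ := by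
      calc cnt h y S₄ ≤ S₄.length := cnt_le_length _ _ _
        _ < κ := by
          have : S₄.length ≤ M.length := by rw [hMsplit]; simp; omega
          omega
    obtain ⟨hJ, hY⟩ := nat_decode hkey hb1 hb2
    rw [hyS₄, ← hcnt h y] at hY
    omega

/- ============ final assembly ============ -/

lemma split_first {a : Mon} : ∀ {L : List Mon}, a ∈ L → ∃ P S, L = P ++ a :: S ∧ a ∉ P := by
  intro L
  induction L with
  | nil => intro h; simp at h
  | cons m L ih =>
      intro h
      by_cases hma : m = a
      · exact ⟨[], L, by rw [hma]; rfl, by simp⟩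
      · have haL : a ∈ L := by
          rcases List.mem_cons.mp h with h' | h'
          · exact absurd h'.symm hma
          · exact h'
        obtain ⟨P, S, rfl, hP⟩ := ih haL
        exact ⟨m :: P, S, rfl, by
          intro hc
          rcases List.mem_cons.mp hc with h' | h'
          · exact hma h'.symm
          · exact hP h'⟩

lemma derives_semEq {X Y : List Mon} (h : Derives (toTerm X) (toTerm Y)) : semEq X Y := by
  intro φ hφ
  rw [← eval_toTerm, ← eval_toTerm]
  exact soundness h φ hφ

/-- the combinatorial dichotomy: either `B` can be moved to the front of `L` by swaps,
or `L` admits a C1-configuration or a C2-configuration w.r.t. `B = (f,j)`. -/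
lemma dichotomy {L : List Mon} {f j : ℕ} (hL : Red L) (hB : (f,j) ∈ L)
    (hmax : ∀ m ∈ L, m.2 = j → m.1 ≤ f) :
    (∃ L₁, swapEq L ((f,j) :: L₁)) ∨
    (∃ h y P S, y ≠ j ∧ L = P ++ (h,y) :: S ∧ (∀ m ∈ S, m.2 = y → m.1 < h) ∧
      (f,j) ∉ P) ∨
    (∃ P S, L = P ++ (f,j) :: S ∧ P ≠ [] ∧ cnt f j L = 1) := by
  classical
  obtain ⟨P, S, hsplit, hBP⟩ := split_first hB
  rcases List.eq_nil_or_concat P with rfl | ⟨P₀, plast, hPc⟩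
  · exact Or.inl ⟨S, by rw [hsplit]; exact Relation.ReflTransGen.refl⟩
  · by_cases hex : ∃ m ∈ P, m ∉ S
    · -- C1 configuration
      obtain ⟨m, hmP, hmS⟩ := hex
      have hmB : m ≠ (f,j) := fun hc => hBP (hc ▸ hmP)
      have hmyj : m.2 ≠ j := by
        intro hc
        have h1 := hmax m (by rw [hsplit]; simp [hmP]) hc
        have h2 : RedRel m (f,j) := red_cross hL hsplit m hmP
        have h3 := h2 (by rw [hc])
        apply hmB
        obtain ⟨e, i⟩ := m
        simp at hc h1 h3 ⊢
        omega
      have hexP : ∃ u ∈ P, u.2 = m.2 ∧ m.1 ≤ u.1 := ⟨m, hmP, rfl, le_refl _⟩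
      obtain ⟨A₁, z, P₂, hPsplit, hz, hP₂⟩ :=
        split_last_pred (p := fun u => u.2 = m.2 ∧ m.1 ≤ u.1) hexP
      have hzyj : z.2 ≠ j := by rw [hz.1]; exact hmyj
      refine Or.inr (Or.inl ⟨z.1, z.2, A₁, P₂ ++ (f,j) :: S, hzyj, ?_, ?_, ?_⟩)
      · rw [hsplit, hPsplit]
        simp
      · intro u hu huy
        rcases List.mem_append.mp hu with hu' | hu'
        · have := hP₂ u hu'
          simp only [huy, hz.1, true_and, not_le] at this
          have := hz.2
          omega
        · rcases List.mem_cons.mp hu' with rfl | hu''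
          · exact absurd (huy.trans hz.1).symm (by simpa using hmyj)
          · -- u ∈ S with u.2 = z.2 = m.2 : then u.1 < m.1 ≤ z.1
            have hrel := red_cross2 hL hsplit m hmP u hu''
            have h1 : u.1 ≤ m.1 := hrel (huy.trans hz.1).symm
            have h2 : u.1 ≠ m.1 := by
              intro hc
              apply hmS
              have : u = m := by
                obtain ⟨e, i⟩ := u
                obtain ⟨e', i'⟩ := m
                simp only at hc huy hz
                rw [hz.1] at huy
                simp [hc, huy]
              rwa [← this]
            have := hz.2
            omega
      · intro hc
        apply hBP
        rw [hPsplit]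
        simp [hc]
    · push_neg at hex
      by_cases hBS : (f,j) ∈ S
      · left
        refine ⟨P ++ S, ?_⟩
        rw [hsplit]
        exact bubble P (f,j) S hBS hex
      · refine Or.inr (Or.inr ⟨P, S, hsplit, ?_, ?_⟩)
        · rw [hPc]; simp
        · rw [hsplit, cnt_append, cnt_cons]
          have h1 : cnt f j P = 0 := by
            apply cnt_eq_zero
            intro u hu hc
            apply hBP
            have : u = (f,j) := by
              obtain ⟨e, i⟩ := u
              simp at hc
              simp [hc]
            rwa [← this]
          have h2 : cnt f j S = 0 := by
            apply cnt_eq_zero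
            intro u hu hc
            apply hBS
            have : u = (f,j) := by
              obtain ⟨e, i⟩ := u
              simp at hc
              simp [hc]
            rwa [← this]
          rw [h1, h2]
          simp

/-- completeness for reduced monomial lists -/
theorem complete : ∀ (M L : List Mon), Red L → Red M → semEq L M →
    Derives (toTerm L) (toTerm M) := by
  intro M
  induction M with
  | nil =>
      intro L hL hM hsem
      cases L with
      | nil => exact Derives.refl _
      | cons m L' =>
          exfalso
          have h1 := cnt_eq_of_semEq hL hM hsem m.1 m.2
          have h2 : 0 < cnt m.1 m.2 (m :: L') := by
            apply cnt_pos_iff.mpr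
            have : m = (m.1, m.2) := rfl
            rw [← this]
            simp
          rw [h1] at h2
          simp [cnt] at h2
  | cons B M' ih =>
      intro L hL hM hsem
      obtain ⟨f, j⟩ := B
      have hcnt : ∀ g v, cnt g v L = cnt g v ((f,j) :: M') :=
        fun g v => cnt_eq_of_semEq hL hM hsem g v
      have hBL : (f,j) ∈ L := by
        have h1 : 0 < cnt f j ((f,j) :: M') := by
          apply cnt_pos_iff.mpr; simp
        rw [← hcnt] at h1
        exact cnt_pos_iff.mp h1
      have hmax : ∀ m ∈ L, m.2 = j → m.1 ≤ f := maxj_of_counts hM hcnt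
      rcases dichotomy hL hBL hmax with ⟨L₁, hswap⟩ | hc1 | hc2
      · -- strip the common head
        have hred1 : Red ((f,j) :: L₁) := red_swapEq hL hswap
        have hder1 : Derives (toTerm L) (toTerm ((f,j) :: L₁)) := swapEq_derives hswap
        have hsem1 : semEq ((f,j) :: L₁) ((f,j) :: M') := by
          intro φ hφ
          have h1 := (derives_semEq hder1) φ hφ
          rw [← h1]
          exact hsem φ hφ
        have hsem2 : semEq L₁ M' := by
          intro φ hφ
          have := hsem1 φ hφ
          rw [lval_cons, lval_cons] at this
          exact add_left_cancel_iff.mp this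
        have hredL₁ : Red L₁ := (List.pairwise_cons.mp hred1).2
        have hredM' : Red M' := (List.pairwise_cons.mp hM).2
        have hIH := ih L₁ hredL₁ hredM' hsem2
        refine hder1.trans ?_
        exact (Derives.refl (mterm (f,j))).add_congr hIH
      · obtain ⟨h, y, P, S, hyj, hsplit, hSy, hBP⟩ := hc1
        exact absurd hsem (fun hs => c1_contra hL hM hs hyj hsplit hSy hBP hBL)
      · obtain ⟨P, S, hsplit, hPne, hcnt1⟩ := hc2
        exact absurd hsem (fun hs => c2_contra hL hM hs hsplit hPne hcnt1)

/-- `Σ` axiomatizes the equational theory of `⟨ω^ω; +, x ↦ ω·x⟩`: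
two terms define the same function on ordinals below `ω^ω` iff they are
derivable from one another in equational logic from `Σ`. -/
theorem sigma_axiomatizes (E F : Term) :
    (∀ φ : ℕ → Ordinal, (∀ i, φ i < ω ^ ω) → E.eval φ = F.eval φ) ↔
      Derives E F := by
  constructor
  · intro hsem
    have hDE : Derives E (toTerm (reduceL (NF E))) :=
      (derives_NF E).trans (derives_reduceL (NF E))
    have hDF : Derives F (toTerm (reduceL (NF F))) :=
      (derives_NF F).trans (derives_reduceL (NF F))
    have hsemL : semEq (reduceL (NF E)) (reduceL (NF F)) := by
      intro φ hφ
      rw [← eval_toTerm, ← eval_toTerm]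
      rw [← soundness hDE φ hφ, ← soundness hDF φ hφ]
      exact hsem φ hφ
    exact hDE.trans ((complete _ _ (red_reduceL _) (red_reduceL _) hsemL).trans hDF.symm)
  · intro h
    exact soundness h
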